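/- arXiv:2309.01412 — 6 statements merged into one kernel-verified Lean document; each statement's English description precedes it below -/
import Mathlib

section
/- The linear dilation d(s) = exp(sG) satisfies ‖d(s)x‖ ≤ e^{βs}‖x‖ for all s ≤ 0 and all x (strict monotonicity with respect to the weighted norm ‖x‖ = √(xᵀPx)) for some β > 0 if and only if P ≻ 0 and PG + GᵀP ≻ 0. -/
open Matrix NormedSpace

noncomputable def dil {n : ℕ} (G : Matrix (Fin n) (Fin n) ℝ) (s : ℝ) :
    Matrix (Fin n) (Fin n) ℝ :=
  NormedSpace.exp (s • G)

/-- The weighted norm `‖x‖ = √(xᵀ P x)`. -/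
noncomputable def wnorm {n : ℕ} (P : Matrix (Fin n) (Fin n) ℝ) (x : Fin n → ℝ) : ℝ :=
  Real.sqrt (x ⬝ᵥ P.mulVec x)

section aux

attribute [local instance] Matrix.linftyOpNormedRing Matrix.linftyOpNormedAlgebra

variable {n : ℕ}

lemma dil_zero (G : Matrix (Fin n) (Fin n) ℝ) : dil G 0 = 1 := by
  simp [dil, NormedSpace.exp_zero]

lemma hasDerivAt_dil (G : Matrix (Fin n) (Fin n) ℝ) (x : Fin n → ℝ) (s : ℝ) :
    HasDerivAt (fun t => dil G t *ᵥ x) (G *ᵥ (dil G s *ᵥ x)) s := by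
  classical
  let L : Matrix (Fin n) (Fin n) ℝ →ₗ[ℝ] (Fin n → ℝ) :=
    { toFun := fun M => M *ᵥ x
      map_add' := fun A B => Matrix.add_mulVec A B x
      map_smul' := fun c A => Matrix.smul_mulVec c A x }
  have h := ((LinearMap.toContinuousLinearMap L).hasFDerivAt
      (x := NormedSpace.exp (s • G))).comp_hasDerivAt s
      (hasDerivAt_exp_smul_const' G s)
  have h2 : HasDerivAt (fun t => L (NormedSpace.exp (t • G)))
      (L (G * NormedSpace.exp (s • G))) s := h
  simpa [dil, L, Matrix.mulVec_mulVec] using h2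

lemma hasDerivAt_dot {u v : ℝ → Fin n → ℝ} {u' v' : Fin n → ℝ} {s : ℝ}
    (hu : HasDerivAt u u' s) (hv : HasDerivAt v v' s) :
    HasDerivAt (fun t => u t ⬝ᵥ v t) (u' ⬝ᵥ v s + u s ⬝ᵥ v') s := by
  have h : ∀ i ∈ Finset.univ, HasDerivAt (fun t => u t i * v t i)
      (u' i * v s i + u s i * v' i) s := fun i _ =>
    ((hasDerivAt_pi.mp hu) i).mul ((hasDerivAt_pi.mp hv) i)
  have := HasDerivAt.fun_sum h
  simpa [dotProduct, Finset.sum_add_distrib] using this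

lemma hasDerivAt_quad (P G : Matrix (Fin n) (Fin n) ℝ)
    (x : Fin n → ℝ) (s : ℝ) :
    HasDerivAt (fun t => (dil G t *ᵥ x) ⬝ᵥ P *ᵥ (dil G t *ᵥ x))
      ((dil G s *ᵥ x) ⬝ᵥ (P * G + Gᵀ * P) *ᵥ (dil G s *ᵥ x)) s := by
  classical
  have hf := hasDerivAt_dil G x s
  have hPf : HasDerivAt (fun t => P *ᵥ (dil G t *ᵥ x))
      (P *ᵥ (G *ᵥ (dil G s *ᵥ x))) s :=
    ((Matrix.mulVecLin P).toContinuousLinearMap.hasFDerivAt).comp_hasDerivAt s hf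
  have h := hasDerivAt_dot hf hPf
  convert h using 1
  set f := dil G s *ᵥ x
  have h1 : f ⬝ᵥ (P * G) *ᵥ f = f ⬝ᵥ (P *ᵥ (G *ᵥ f)) := by
    rw [← Matrix.mulVec_mulVec]
  have h2 : f ⬝ᵥ (Gᵀ * P) *ᵥ f = (G *ᵥ f) ⬝ᵥ (P *ᵥ f) := by
    rw [← Matrix.mulVec_mulVec, Matrix.dotProduct_mulVec f Gᵀ,
      Matrix.vecMul_transpose]
  rw [Matrix.add_mulVec, dotProduct_add, h1, h2, add_comm]

lemma quad_smul (M : Matrix (Fin n) (Fin n) ℝ) (r : ℝ) (y : Fin n → ℝ) :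
    (r • y) ⬝ᵥ M *ᵥ (r • y) = r ^ 2 * (y ⬝ᵥ M *ᵥ y) := by
  rw [smul_dotProduct, Matrix.mulVec_smul, dotProduct_smul]
  simp only [smul_eq_mul]; ring

lemma exists_beta {P Q : Matrix (Fin n) (Fin n) ℝ} (hP : P.PosDef) (hQ : Q.PosDef) :
    ∃ β : ℝ, 0 < β ∧ ∀ y : Fin n → ℝ, 2 * β * (y ⬝ᵥ P *ᵥ y) ≤ y ⬝ᵥ Q *ᵥ y := by
  rcases Nat.eq_zero_or_pos n with hn | hn
  · refine ⟨1, one_pos, fun y => ?_⟩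
    subst hn
    have : y = 0 := Subsingleton.elim _ _
    simp [this]
  · haveI : Nonempty (Fin n) := Fin.pos_iff_nonempty.mp hn
    set S : Set (Fin n → ℝ) := Metric.sphere 0 1 with hS
    have hScomp : IsCompact S := isCompact_sphere 0 1
    have hSne : S.Nonempty := NormedSpace.sphere_nonempty.mpr zero_le_one
    have hq : Continuous fun y : Fin n → ℝ => y ⬝ᵥ Q *ᵥ y := by
      continuity
    have hp : Continuous fun y : Fin n → ℝ => y ⬝ᵥ P *ᵥ y := by
      continuity
    obtain ⟨a, haS, ha⟩ := hScomp.exists_isMinOn hSne hq.continuousOn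
    obtain ⟨b, hbS, hb⟩ := hScomp.exists_isMaxOn hSne hp.continuousOn
    have hane : a ≠ 0 := by
      intro h; rw [hS, mem_sphere_iff_norm, h] at haS; simp at haS
    have hbne : b ≠ 0 := by
      intro h; rw [hS, mem_sphere_iff_norm, h] at hbS; simp at hbS
    have hc : 0 < a ⬝ᵥ Q *ᵥ a := by simpa using hQ.dotProduct_mulVec_pos hane
    have hC : 0 < b ⬝ᵥ P *ᵥ b := by simpa using hP.dotProduct_mulVec_pos hbne
    set c := a ⬝ᵥ Q *ᵥ a
    set C := b ⬝ᵥ P *ᵥ b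
    refine ⟨c / (2 * C), by positivity, fun y => ?_⟩
    by_cases hy : y = 0
    · simp [hy]
    · set r : ℝ := ‖y‖ with hr
      have hrpos : 0 < r := norm_pos_iff.mpr hy
      set u : Fin n → ℝ := r⁻¹ • y with hu
      have huS : u ∈ S := by
        rw [hS, mem_sphere_iff_norm, sub_zero, hu, norm_smul]
        simp only [norm_inv, norm_norm, Real.norm_eq_abs, ← hr,
          abs_of_pos hrpos]
        exact inv_mul_cancel₀ hrpos.ne'
      have hyu : y = r • u := by
        rw [hu, smul_smul, mul_inv_cancel₀ hrpos.ne', one_smul]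
      have hq1 : c ≤ u ⬝ᵥ Q *ᵥ u := ha huS
      have hp1 : u ⬝ᵥ P *ᵥ u ≤ C := hb huS
      set β := c / (2 * C) with hβ
      have hβpos : 0 < β := by positivity
      have hβC : 2 * β * C = c := by rw [hβ]; field_simp
      have hup : 0 ≤ u ⬝ᵥ P *ᵥ u := by
        by_cases hu0 : u = 0
        · simp [hu0]
        · have h0 := hP.dotProduct_mulVec_pos hu0
          rw [star_trivial] at h0
          exact h0.le
      clear_value u
      rw [hyu, quad_smul, quad_smul]
      calc 2 * β * (r ^ 2 * (u ⬝ᵥ P *ᵥ u))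
          ≤ 2 * β * (r ^ 2 * C) := by
            refine mul_le_mul_of_nonneg_left ?_ (by positivity)
            exact mul_le_mul_of_nonneg_left hp1 (by positivity)
        _ = r ^ 2 * c := by rw [← hβC]; ring
        _ ≤ r ^ 2 * (u ⬝ᵥ Q *ᵥ u) :=
            mul_le_mul_of_nonneg_left hq1 (by positivity)

lemma wnorm_sq {P : Matrix (Fin n) (Fin n) ℝ} (hP : P.PosDef) (y : Fin n → ℝ) :
    wnorm P y ^ 2 = y ⬝ᵥ P *ᵥ y := by
  apply Real.sq_sqrt
  have := hP.posSemidef.dotProduct_mulVec_nonneg y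
  simpa using this

end aux

/-- the dilation `d(s)=exp(sG)` is strictly monotone w.r.t. `‖x‖ = √(xᵀPx)`
(i.e. `∃ β > 0` with `‖d(s)x‖ ≤ e^{βs}‖x‖` for all `s ≤ 0`) iff `P ≻ 0` and `PG + GᵀP ≻ 0`. -/
theorem stmt2 {n : ℕ} (P G : Matrix (Fin n) (Fin n) ℝ) (hP : P.PosDef) :
    (∃ β : ℝ, 0 < β ∧ ∀ s : ℝ, s ≤ 0 → ∀ x : Fin n → ℝ,
        wnorm P (dil G s *ᵥ x) ≤ Real.exp (β * s) * wnorm P x) ↔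
    (P.PosDef ∧ (P * G + Gᵀ * P).PosDef) := by
  have hPt : Pᵀ = P := by
    have h := hP.isHermitian
    rwa [Matrix.IsHermitian, Matrix.conjTranspose_eq_transpose_of_trivial] at h
  constructor
  · rintro ⟨β, hβ, hmono⟩
    refine ⟨hP, Matrix.PosDef.of_dotProduct_mulVec_pos ?_ ?_⟩
    · rw [Matrix.IsHermitian, Matrix.conjTranspose_eq_transpose_of_trivial,
        Matrix.transpose_add, Matrix.transpose_mul, Matrix.transpose_mul,
        Matrix.transpose_transpose, hPt, add_comm]
    · intro x hx
      rw [star_trivial]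
      set Q := P * G + Gᵀ * P with hQdef
      set φ : ℝ → ℝ := fun t => (dil G t *ᵥ x) ⬝ᵥ P *ᵥ (dil G t *ᵥ x) with hφ
      have hφ0 : φ 0 = x ⬝ᵥ P *ᵥ x := by
        simp [hφ, dil_zero, Matrix.one_mulVec]
      have hφ0pos : 0 < φ 0 := by
        rw [hφ0]
        have h0 := hP.dotProduct_mulVec_pos hx
        rwa [star_trivial] at h0
      set D : ℝ := x ⬝ᵥ Q *ᵥ x with hD
      have hDD : HasDerivAt φ D 0 := by
        have h := hasDerivAt_quad P G x 0
        simpa [hφ, hD, dil_zero, Matrix.one_mulVec] using h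
      -- φ t ≤ exp (2βt) * φ 0 for t ≤ 0
      have hφle : ∀ t : ℝ, t ≤ 0 → φ t ≤ Real.exp (2 * β * t) * φ 0 := by
        intro t ht
        have h := hmono t ht x
        have hwn : 0 ≤ wnorm P (dil G t *ᵥ x) := Real.sqrt_nonneg _
        have h2 : wnorm P (dil G t *ᵥ x) ^ 2 ≤
            (Real.exp (β * t) * wnorm P x) ^ 2 := by
          apply pow_le_pow_left₀ hwn h
        rw [wnorm_sq hP] at h2
        calc φ t ≤ (Real.exp (β * t) * wnorm P x) ^ 2 := h2
          _ = Real.exp (β * t) ^ 2 * (wnorm P x ^ 2) := by ring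
          _ = Real.exp (2 * β * t) * φ 0 := by
              rw [wnorm_sq hP, ← hφ0]
              congr 1
              rw [sq, ← Real.exp_add]
              ring_nf
      set ψ : ℝ → ℝ := fun t => φ t - Real.exp (2 * β * t) * φ 0 with hψdef
      have hψ0 : ψ 0 = 0 := by simp [hψdef]
      have hexp : HasDerivAt (fun t : ℝ => Real.exp (2 * β * t) * φ 0)
          (2 * β * φ 0) 0 := by
        have h1 : HasDerivAt (fun t : ℝ => 2 * β * t) (2 * β) 0 := by
          simpa using (hasDerivAt_id (0:ℝ)).const_mul (2 * β)
        have h2 := (h1.exp).mul_const (φ 0)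
        simpa using h2
      have hψ : HasDerivAt ψ (D - 2 * β * φ 0) 0 := hDD.sub hexp
      have key : 0 ≤ D - 2 * β * φ 0 := by
        have htend := hasDerivAt_iff_tendsto_slope.mp hψ
        have hsub : (Set.Iio (0:ℝ)) ⊆ {(0:ℝ)}ᶜ := fun t ht => ne_of_lt ht
        have htend' : Filter.Tendsto (slope ψ 0) (nhdsWithin 0 (Set.Iio 0))
            (nhds (D - 2 * β * φ 0)) :=
          htend.mono_left (nhdsWithin_mono 0 hsub)
        refine ge_of_tendsto htend' ?_
        filter_upwards [self_mem_nhdsWithin] with t ht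
        rw [slope_def_field]
        have hψt : ψ t ≤ 0 := sub_nonpos.mpr (hφle t (le_of_lt ht))
        rw [hψ0, sub_zero, sub_zero]
        exact div_nonneg_iff.mpr (Or.inr ⟨hψt, le_of_lt ht⟩)
      have : 2 * β * φ 0 ≤ D := by linarith
      have hpos : 0 < D := lt_of_lt_of_le (by positivity) this
      exact hpos
  · rintro ⟨-, hQ⟩
    obtain ⟨β, hβpos, hβ⟩ := exists_beta hP hQ
    refine ⟨β, hβpos, fun s hs x => ?_⟩
    set Q := P * G + Gᵀ * P with hQdef
    set φ : ℝ → ℝ := fun t => (dil G t *ᵥ x) ⬝ᵥ P *ᵥ (dil G t *ᵥ x) with hφ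
    have hφ0 : φ 0 = x ⬝ᵥ P *ᵥ x := by
      simp [hφ, dil_zero, Matrix.one_mulVec]
    set g : ℝ → ℝ := fun t => Real.exp (-(2 * β * t)) * φ t with hg
    have hgderiv : ∀ t : ℝ, HasDerivAt g
        (Real.exp (-(2 * β * t)) *
          ((dil G t *ᵥ x) ⬝ᵥ Q *ᵥ (dil G t *ᵥ x) - 2 * β * φ t)) t := by
      intro t
      have h1 : HasDerivAt (fun u : ℝ => Real.exp (-(2 * β * u)))
          (Real.exp (-(2 * β * t)) * (-(2 * β))) t := by
        have h0 : HasDerivAt (fun u : ℝ => -(2 * β * u)) (-(2 * β)) t := by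
          simpa using ((hasDerivAt_id t).const_mul (2 * β)).fun_neg
        exact h0.exp
      have h2 := hasDerivAt_quad P G x t
      have h3 := h1.fun_mul h2
      convert h3 using 1
      · rfl
      · rfl
      · ring
    have hgmono : Monotone g := by
      apply monotone_of_deriv_nonneg
      · exact fun t => (hgderiv t).differentiableAt
      · intro t
        rw [(hgderiv t).deriv]
        have hquad := hβ (dil G t *ᵥ x)
        have : 0 ≤ (dil G t *ᵥ x) ⬝ᵥ Q *ᵥ (dil G t *ᵥ x) - 2 * β * φ t := by
          rw [hφ]; linarith
        positivity
    have hgs : g s ≤ g 0 := hgmono hs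
    have hφsle : φ s ≤ Real.exp (2 * β * s) * φ 0 := by
      have h0 : g 0 = φ 0 := by simp [hg]
      rw [h0] at hgs
      have := mul_le_mul_of_nonneg_left hgs (Real.exp_nonneg (2 * β * s))
      rw [hg] at this
      simp only [← mul_assoc, ← Real.exp_add] at this
      simpa using this
    -- take square roots
    have hφ0nonneg : 0 ≤ φ 0 := by
      rw [hφ0]
      have := hP.posSemidef.dotProduct_mulVec_nonneg x
      simpa using this
    have h1 : wnorm P (dil G s *ᵥ x) = Real.sqrt (φ s) := rfl
    have h2 : wnorm P x = Real.sqrt (φ 0) := by rw [hφ0]; rfl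
    rw [h1, h2]
    calc Real.sqrt (φ s) ≤ Real.sqrt (Real.exp (2 * β * s) * φ 0) :=
          Real.sqrt_le_sqrt hφsle
      _ = Real.exp (β * s) * Real.sqrt (φ 0) := by
          rw [Real.sqrt_mul (Real.exp_nonneg _)]
          congr 1
          rw [show (2 : ℝ) * β * s = β * s + β * s by ring, Real.exp_add,
            Real.sqrt_mul_self (Real.exp_nonneg _)]
end

section
/- For a strictly monotone linear dilation d(s) = exp(sG) with respect to ‖x‖ = √(xᵀPx): e^{η̲s} ≤ ⌊d(s)⌋ ≤ ‖d(s)‖ ≤ e^{η̄s} for s ≥ 0 and e^{η̄s} ≤ ⌊d(s)⌋ ≤ ‖d(s)‖ ≤ e^{η̲s} for s ≤ 0, where η̄ = ½λ_max(P^{1/2}GP^{-1/2} + P^{-1/2}GᵀP^{1/2}) and η̲ = ½λ_min of the same matrix. -/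
open Matrix NormedSpace

section

open scoped ComplexOrder

/-- The positive semidefinite square root of a positive semidefinite matrix
(the definition `Matrix.PosSemidef.sqrt` of the older Mathlib, since removed). -/
noncomputable def Matrix.PosSemidef.sqrt {n : Type*} {𝕜 : Type*} [Fintype n] [RCLike 𝕜]
    [DecidableEq n] {A : Matrix n n 𝕜} (hA : A.PosSemidef) : Matrix n n 𝕜 :=
  hA.1.eigenvectorUnitary.1 * diagonal ((↑) ∘ (√·) ∘ hA.1.eigenvalues) *
  (star hA.1.eigenvectorUnitary : Matrix n n 𝕜)

end

/-- `‖d(s)‖ = sup_{‖u‖=1} ‖d(s)u‖` (operator "norm" w.r.t. the weighted norm). -/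
noncomputable def dsup {n : ℕ} (P G : Matrix (Fin n) (Fin n) ℝ) (s : ℝ) : ℝ :=
  sSup {r : ℝ | ∃ u : Fin n → ℝ, wnorm P u = 1 ∧ r = wnorm P (dil G s *ᵥ u)}

/-- `⌊d(s)⌋ = inf_{‖u‖=1} ‖d(s)u‖`. -/
noncomputable def dinf {n : ℕ} (P G : Matrix (Fin n) (Fin n) ℝ) (s : ℝ) : ℝ :=
  sInf {r : ℝ | ∃ u : Fin n → ℝ, wnorm P u = 1 ∧ r = wnorm P (dil G s *ᵥ u)}

noncomputable def mvCLM {n : ℕ} (v : Fin n → ℝ) (i : Fin n) :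
    Matrix (Fin n) (Fin n) ℝ →L[ℝ] ℝ :=
  LinearMap.toContinuousLinearMap
    { toFun := fun A => (A *ᵥ v) i
      map_add' := fun A B => by simp [Matrix.add_mulVec]
      map_smul' := fun c A => by simp [Matrix.smul_mulVec] }

lemma exp_entry_hasDerivAt {n : ℕ} (M : Matrix (Fin n) (Fin n) ℝ) (v : Fin n → ℝ)
    (t : ℝ) (i : Fin n) :
    HasDerivAt (fun s : ℝ => (exp (s • M) *ᵥ v) i)
      (((M * exp (t • M)) *ᵥ v) i) t := by
  letI : SeminormedRing (Matrix (Fin n) (Fin n) ℝ) := Matrix.linftyOpSemiNormedRing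
  letI : NormedRing (Matrix (Fin n) (Fin n) ℝ) := Matrix.linftyOpNormedRing
  letI : NormedAlgebra ℝ (Matrix (Fin n) (Fin n) ℝ) := Matrix.linftyOpNormedAlgebra
  exact (mvCLM v i).hasFDerivAt.comp_hasDerivAt t (hasDerivAt_exp_smul_const' M t)

lemma g_hasDerivAt {n : ℕ} (M : Matrix (Fin n) (Fin n) ℝ) (v : Fin n → ℝ) (t : ℝ) :
    HasDerivAt (fun s : ℝ => (exp (s • M) *ᵥ v) ⬝ᵥ (exp (s • M) *ᵥ v))
      ((exp (t • M) *ᵥ v) ⬝ᵥ ((M + Mᵀ) *ᵥ (exp (t • M) *ᵥ v))) t := by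
  have h : HasDerivAt (fun s : ℝ => ∑ i, (exp (s • M) *ᵥ v) i * (exp (s • M) *ᵥ v) i)
      (∑ i, (((M * exp (t • M)) *ᵥ v) i * (exp (t • M) *ᵥ v) i
        + (exp (t • M) *ᵥ v) i * ((M * exp (t • M)) *ᵥ v) i)) t :=
    HasDerivAt.fun_sum fun i _ => (exp_entry_hasDerivAt M v t i).mul (exp_entry_hasDerivAt M v t i)
  have hval : (exp (t • M) *ᵥ v) ⬝ᵥ ((M + Mᵀ) *ᵥ (exp (t • M) *ᵥ v))
      = ∑ i, (((M * exp (t • M)) *ᵥ v) i * (exp (t • M) *ᵥ v) i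
        + (exp (t • M) *ᵥ v) i * ((M * exp (t • M)) *ᵥ v) i) := by
    have hMx : (M * exp (t • M)) *ᵥ v = M *ᵥ (exp (t • M) *ᵥ v) :=
      (Matrix.mulVec_mulVec _ _ _).symm
    rw [hMx, Matrix.add_mulVec, dotProduct_add,
      Matrix.dotProduct_mulVec _ Mᵀ _, Matrix.vecMul_transpose, Finset.sum_add_distrib,
      add_comm]
    rfl
  rw [hval]
  exact h

lemma core_antitone {n : ℕ} {M : Matrix (Fin n) (Fin n) ℝ} {c : ℝ}
    (hub : ∀ x : Fin n → ℝ, x ⬝ᵥ (M + Mᵀ) *ᵥ x ≤ c * (x ⬝ᵥ x)) (v : Fin n → ℝ) :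
    Antitone fun s : ℝ =>
      ((exp (s • M) *ᵥ v) ⬝ᵥ (exp (s • M) *ᵥ v)) * Real.exp (-(c * s)) := by
  have hd : ∀ t : ℝ, HasDerivAt (fun s : ℝ =>
      ((exp (s • M) *ᵥ v) ⬝ᵥ (exp (s • M) *ᵥ v)) * Real.exp (-(c * s)))
      (((exp (t • M) *ᵥ v) ⬝ᵥ ((M + Mᵀ) *ᵥ (exp (t • M) *ᵥ v))) * Real.exp (-(c * t))
        + ((exp (t • M) *ᵥ v) ⬝ᵥ (exp (t • M) *ᵥ v)) * (Real.exp (-(c * t)) * -c)) t := by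
    intro t
    have h2 : HasDerivAt (fun s : ℝ => Real.exp (-(c * s))) (Real.exp (-(c * t)) * -c) t := by
      have h3 : HasDerivAt (fun s : ℝ => -(c * s)) (-c) t := by
        simpa using ((hasDerivAt_id t).const_mul c).fun_neg
      exact h3.exp
    exact (g_hasDerivAt M v t).mul h2
  apply antitone_of_deriv_nonpos
  · exact fun t => (hd t).differentiableAt
  · intro t
    rw [(hd t).deriv]
    have h := hub (exp (t • M) *ᵥ v)
    have hg : 0 ≤ (exp (t • M) *ᵥ v) ⬝ᵥ (exp (t • M) *ᵥ v) := by
      simpa [dotProduct] using Finset.sum_nonneg fun i _ =>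
        mul_self_nonneg ((exp (t • M) *ᵥ v) i)
    have he := (Real.exp_pos (-(c * t))).le
    nlinarith [mul_le_mul_of_nonneg_right h he]

lemma psd_smul_one {n : ℕ} {c : ℝ} (hc : 0 ≤ c) :
    (c • (1 : Matrix (Fin n) (Fin n) ℝ)).PosSemidef := by
  rw [smul_one_eq_diagonal]
  exact Matrix.posSemidef_diagonal_iff.mpr fun i => hc

lemma spectrum_pos_of_posDef {n : ℕ} {A : Matrix (Fin n) (Fin n) ℝ} (hA : A.PosDef)
    {μ : ℝ} (hμ : μ ∈ spectrum ℝ A) : 0 < μ := by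
  by_contra h
  push_neg at h
  have hpd : (A + (-μ) • 1).PosDef := hA.add_posSemidef (psd_smul_one (by linarith))
  have hu : IsUnit (A + (-μ) • (1 : Matrix (Fin n) (Fin n) ℝ)) := hpd.isUnit
  have heq : (algebraMap ℝ (Matrix (Fin n) (Fin n) ℝ)) μ - A = -(A + (-μ) • 1) := by
    rw [Algebra.algebraMap_eq_smul_one]
    module
  exact (spectrum.mem_iff.mp hμ) (heq ▸ hu.neg)

lemma quadform_le_of_spectrum_ub {n : ℕ} {A : Matrix (Fin n) (Fin n) ℝ}
    (hA : A.IsHermitian) {c : ℝ} (h : ∀ μ ∈ spectrum ℝ A, μ ≤ c) (x : Fin n → ℝ) :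
    x ⬝ᵥ A *ᵥ x ≤ c * (x ⬝ᵥ x) := by
  have hherm : (c • 1 - A).IsHermitian := by
    rw [smul_one_eq_diagonal]
    exact (Matrix.isHermitian_diagonal _).sub hA
  have hB : (c • 1 - A).PosSemidef := by
    refine hherm.posSemidef_iff_eigenvalues_nonneg.mpr fun i => ?_
    show 0 ≤ hherm.eigenvalues i
    have hmem := hherm.eigenvalues_mem_spectrum_real i
    have hmem' : hherm.eigenvalues i ∈ spectrum ℝ (algebraMap ℝ (Matrix (Fin n) (Fin n) ℝ) c - A) := by
      rw [Algebra.algebraMap_eq_smul_one]; exact hmem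
    rw [← spectrum.singleton_sub_eq] at hmem'
    replace hmem := hmem'
    obtain ⟨a, ha, b, hb, hab⟩ := Set.mem_sub.mp hmem
    rw [Set.mem_singleton_iff] at ha
    subst ha
    linarith [h b hb]
  have h0 := hB.dotProduct_mulVec_nonneg x
  simp only [Matrix.sub_mulVec, Matrix.smul_mulVec, Matrix.one_mulVec,
    dotProduct_sub, dotProduct_smul, star_trivial, smul_eq_mul] at h0
  linarith

lemma quadform_ge_of_spectrum_lb {n : ℕ} {A : Matrix (Fin n) (Fin n) ℝ}
    (hA : A.IsHermitian) {c : ℝ} (h : ∀ μ ∈ spectrum ℝ A, c ≤ μ) (x : Fin n → ℝ) :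
    c * (x ⬝ᵥ x) ≤ x ⬝ᵥ A *ᵥ x := by
  have hherm : (A - c • 1).IsHermitian := by
    rw [smul_one_eq_diagonal]
    exact hA.sub (Matrix.isHermitian_diagonal _)
  have hB : (A - c • 1).PosSemidef := by
    refine hherm.posSemidef_iff_eigenvalues_nonneg.mpr fun i => ?_
    show 0 ≤ hherm.eigenvalues i
    have hmem := hherm.eigenvalues_mem_spectrum_real i
    have hmem' : hherm.eigenvalues i ∈ spectrum ℝ (A - algebraMap ℝ (Matrix (Fin n) (Fin n) ℝ) c) := by
      rw [Algebra.algebraMap_eq_smul_one]; exact hmem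
    rw [← spectrum.sub_singleton_eq] at hmem'
    replace hmem := hmem'
    obtain ⟨a, ha, b, hb, hab⟩ := Set.mem_sub.mp hmem
    rw [Set.mem_singleton_iff] at hb
    subst hb
    linarith [h a ha]
  have h0 := hB.dotProduct_mulVec_nonneg x
  simp only [Matrix.sub_mulVec, Matrix.smul_mulVec, Matrix.one_mulVec,
    dotProduct_sub, dotProduct_smul, star_trivial, smul_eq_mul] at h0
  linarith

lemma posDef_conj {n : ℕ} {B N : Matrix (Fin n) (Fin n) ℝ} (hB : B.PosDef)
    (hN : IsUnit N) : (Nᴴ * B * N).PosDef := by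
  refine Matrix.PosDef.of_dotProduct_mulVec_pos (Matrix.isHermitian_conjTranspose_mul_mul N hB.1) fun x hx => ?_
  have hNx : N *ᵥ x ≠ 0 := by
    intro h0
    apply hx
    have hinj := Matrix.mulVec_injective_iff_isUnit.mpr hN
    exact hinj (by simpa using h0)
  have h := hB.dotProduct_mulVec_pos hNx
  calc (0:ℝ) < star (N *ᵥ x) ⬝ᵥ B *ᵥ (N *ᵥ x) := h
    _ = star x ⬝ᵥ (Nᴴ * B * N) *ᵥ x := by
        rw [Matrix.star_mulVec, ← Matrix.dotProduct_mulVec, ← Matrix.mulVec_mulVec,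
          ← Matrix.mulVec_mulVec]


section

open scoped ComplexOrder

lemma sqrt_posSemidef_aux {m : Type*} {𝕜 : Type*} [Fintype m] [RCLike 𝕜]
    [DecidableEq m] {A : Matrix m m 𝕜} (hA : A.PosSemidef) : hA.sqrt.PosSemidef := by
  unfold Matrix.PosSemidef.sqrt
  have hd : (diagonal ((↑) ∘ (√·) ∘ hA.1.eigenvalues) : Matrix m m 𝕜).PosSemidef :=
    Matrix.posSemidef_diagonal_iff.mpr fun i => RCLike.ofReal_nonneg.mpr (Real.sqrt_nonneg _)
  exact hd.mul_mul_conjTranspose_same (hA.1.eigenvectorUnitary.1)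

lemma sqrt_mul_self_aux {m : Type*} {𝕜 : Type*} [Fintype m] [RCLike 𝕜]
    [DecidableEq m] {A : Matrix m m 𝕜} (hA : A.PosSemidef) : hA.sqrt * hA.sqrt = A := by
  unfold Matrix.PosSemidef.sqrt
  have hU : (star hA.1.eigenvectorUnitary : Matrix m m 𝕜) * hA.1.eigenvectorUnitary.1 = 1 :=
    Unitary.star_mul_self_of_mem hA.1.eigenvectorUnitary.2
  have hD : (diagonal ((↑) ∘ (√·) ∘ hA.1.eigenvalues) : Matrix m m 𝕜) *
      diagonal ((↑) ∘ (√·) ∘ hA.1.eigenvalues) = diagonal ((↑) ∘ hA.1.eigenvalues) := by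
    rw [diagonal_mul_diagonal]
    congr 1
    funext i
    simp only [Function.comp_apply]
    rw [← RCLike.ofReal_mul, Real.mul_self_sqrt (hA.eigenvalues_nonneg i)]
  have hs := hA.1.spectral_theorem
  rw [Unitary.conjStarAlgAut_apply] at hs
  calc _ = hA.1.eigenvectorUnitary.1 * diagonal ((↑) ∘ (√·) ∘ hA.1.eigenvalues) *
        ((star hA.1.eigenvectorUnitary : Matrix m m 𝕜) * hA.1.eigenvectorUnitary.1) *
        diagonal ((↑) ∘ (√·) ∘ hA.1.eigenvalues) *
        (star hA.1.eigenvectorUnitary : Matrix m m 𝕜) := by simp only [mul_assoc]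
    _ = hA.1.eigenvectorUnitary.1 * diagonal ((↑) ∘ hA.1.eigenvalues) *
        (star hA.1.eigenvectorUnitary : Matrix m m 𝕜) := by
      rw [hU, mul_one, mul_assoc _ (diagonal _) (diagonal _), hD]
    _ = A := hs.symm

end

/-- with `2η̄ = λ_max(P^{1/2}GP^{-1/2} + P^{-1/2}GᵀP^{1/2})` and
`2η̲ = λ_min` of the same matrix:
`e^{η̲s} ≤ ⌊d(s)⌋ ≤ ‖d(s)‖ ≤ e^{η̄s}` for `s ≥ 0`, and
`e^{η̄s} ≤ ⌊d(s)⌋ ≤ ‖d(s)‖ ≤ e^{η̲s}` for `s ≤ 0`. -/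
theorem stmt5 {n : ℕ} (P G : Matrix (Fin n) (Fin n) ℝ) (hP : P.PosDef)
    (hmon : (P * G + Gᵀ * P).PosDef) (η₁ η₂ : ℝ)
    (hmax : IsGreatest (spectrum ℝ
      (hP.posSemidef.sqrt * G * (hP.posSemidef.sqrt)⁻¹ +
        (hP.posSemidef.sqrt)⁻¹ * Gᵀ * hP.posSemidef.sqrt)) (2 * η₂))
    (hmin : IsLeast (spectrum ℝ
      (hP.posSemidef.sqrt * G * (hP.posSemidef.sqrt)⁻¹ +
        (hP.posSemidef.sqrt)⁻¹ * Gᵀ * hP.posSemidef.sqrt)) (2 * η₁)) :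
    (0 < η₁ ∧ 0 < η₂) ∧
    (∀ s : ℝ, 0 ≤ s →
      Real.exp (η₁ * s) ≤ dinf P G s ∧ dinf P G s ≤ dsup P G s ∧
        dsup P G s ≤ Real.exp (η₂ * s)) ∧
    (∀ s : ℝ, s ≤ 0 →
      Real.exp (η₂ * s) ≤ dinf P G s ∧ dinf P G s ≤ dsup P G s ∧
        dsup P G s ≤ Real.exp (η₁ * s)) := by
  classical
  set Q := hP.posSemidef.sqrt with hQdef
  have hQpsd : Q.PosSemidef := sqrt_posSemidef_aux hP.posSemidef
  have hQQ : Q * Q = P := sqrt_mul_self_aux hP.posSemidef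
  have hdet : IsUnit Q.det := by
    have hPdet : P.det ≠ 0 := hP.det_pos.ne'
    have : Q.det * Q.det = P.det := by rw [← Matrix.det_mul, hQQ]
    exact isUnit_iff_ne_zero.mpr fun h0 => hPdet (by rw [← this, h0, mul_zero])
  have hQunit : IsUnit Q := (Matrix.isUnit_iff_isUnit_det Q).mpr hdet
  have h1 : Q⁻¹ * Q = 1 := Matrix.nonsing_inv_mul Q hdet
  have h2 : Q * Q⁻¹ = 1 := Matrix.mul_nonsing_inv Q hdet
  have hQsymm : Qᵀ = Q := by
    have := hQpsd.1
    rwa [Matrix.IsHermitian, Matrix.conjTranspose_eq_transpose_of_trivial] at this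
  set M := Q * G * Q⁻¹ with hMdef
  have hMT : Mᵀ = Q⁻¹ * Gᵀ * Q := by
    rw [hMdef, Matrix.transpose_mul, Matrix.transpose_mul, Matrix.transpose_nonsing_inv,
      hQsymm, mul_assoc]
  -- the matrix in hmax/hmin is M + Mᵀ
  have hAmat : Q * G * Q⁻¹ + Q⁻¹ * Gᵀ * Q = M + Mᵀ := by rw [hMT]
  rw [hAmat] at hmax hmin
  have hQinv_herm : (Q⁻¹)ᴴ = Q⁻¹ := by
    rw [Matrix.conjTranspose_eq_transpose_of_trivial, Matrix.transpose_nonsing_inv, hQsymm]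
  have hA2 : (Q⁻¹)ᴴ * (P * G + Gᵀ * P) * Q⁻¹ = M + Mᵀ := by
    rw [hQinv_herm, hMT, ← hQQ, Matrix.mul_add, Matrix.add_mul]
    congr 1
    · calc Q⁻¹ * (Q * Q * G) * Q⁻¹ = Q⁻¹ * Q * (Q * G) * Q⁻¹ := by
            noncomm_ring
        _ = Q * G * Q⁻¹ := by rw [h1, one_mul]
    · calc Q⁻¹ * (Gᵀ * (Q * Q)) * Q⁻¹ = Q⁻¹ * Gᵀ * Q * (Q * Q⁻¹) := by
            noncomm_ring
        _ = Q⁻¹ * Gᵀ * Q := by rw [h2, mul_one]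
  have hApd : (M + Mᵀ).PosDef := hA2 ▸ posDef_conj hmon
    ((Matrix.isUnit_nonsing_inv_iff).mpr hQunit)
  -- positivity of η₁, η₂
  have h2η₁pos : 0 < 2 * η₁ := spectrum_pos_of_posDef hApd hmin.1
  have hη₁η₂ : 2 * η₁ ≤ 2 * η₂ := hmax.2 hmin.1
  have hη₁ : 0 < η₁ := by linarith
  have hη₂ : 0 < η₂ := by linarith
  -- quadratic form bounds
  have hub : ∀ x : Fin n → ℝ, x ⬝ᵥ (M + Mᵀ) *ᵥ x ≤ (2 * η₂) * (x ⬝ᵥ x) := fun x => by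
    have := quadform_le_of_spectrum_ub hApd.1 (fun μ hμ => hmax.2 hμ) x
    simpa [star_trivial] using this
  have hlb : ∀ x : Fin n → ℝ, (2 * η₁) * (x ⬝ᵥ x) ≤ x ⬝ᵥ (M + Mᵀ) *ᵥ x := fun x => by
    have := quadform_ge_of_spectrum_lb hApd.1 (fun μ hμ => hmin.2 hμ) x
    simpa [star_trivial] using this
  -- weighted norm via Q
  have hwnorm : ∀ y : Fin n → ℝ, wnorm P y = Real.sqrt ((Q *ᵥ y) ⬝ᵥ (Q *ᵥ y)) := by
    intro y
    unfold wnorm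
    congr 1
    conv_lhs => rw [← hQQ]
    rw [← Matrix.mulVec_mulVec, Matrix.dotProduct_mulVec]
    congr 1
    conv_lhs => rw [← hQsymm]
    rw [Matrix.vecMul_transpose]
  -- conjugation of the dilation
  have hconj : ∀ s : ℝ, ∀ y : Fin n → ℝ, Q *ᵥ (dil G s *ᵥ y) = exp (s • M) *ᵥ (Q *ᵥ y) := by
    intro s y
    simp only [dil]
    have hsM : s • M = Q * (s • G) * Q⁻¹ := by
      rw [hMdef, Matrix.mul_smul, Matrix.smul_mul]
    have hexp : exp (s • M) = Q * exp (s • G) * Q⁻¹ := by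
      rw [hsM]; exact Matrix.exp_conj Q (s • G) hQunit
    have hQexp : exp (s • M) * Q = Q * exp (s • G) := by
      rw [hexp, mul_assoc, h1, mul_one]
    rw [Matrix.mulVec_mulVec, Matrix.mulVec_mulVec, ← hQexp]
  -- the key per-element estimate
  have key : ∀ s : ℝ, ∀ r ∈ {r : ℝ | ∃ u : Fin n → ℝ,
      wnorm P u = 1 ∧ r = wnorm P (dil G s *ᵥ u)},
      (0 ≤ s → Real.exp (η₁ * s) ≤ r ∧ r ≤ Real.exp (η₂ * s)) ∧
      (s ≤ 0 → Real.exp (η₂ * s) ≤ r ∧ r ≤ Real.exp (η₁ * s)) := by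
    intro s r hr
    obtain ⟨u, hu1, hru⟩ := hr
    set v := Q *ᵥ u with hvdef
    have hv1 : v ⬝ᵥ v = 1 := by
      have := hu1
      rw [hwnorm, Real.sqrt_eq_one] at this
      exact this
    have hrv : r = Real.sqrt ((exp (s • M) *ᵥ v) ⬝ᵥ (exp (s • M) *ᵥ v)) := by
      rw [hru, hwnorm, hconj]
    -- g bounds
    have hg0 : (exp ((0:ℝ) • M) *ᵥ v) ⬝ᵥ (exp ((0:ℝ) • M) *ᵥ v) = 1 := by
      rw [zero_smul, NormedSpace.exp_zero, Matrix.one_mulVec, hv1]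
    have expLe : ∀ a b : ℝ, a * Real.exp (-b) ≤ 1 → a ≤ Real.exp b := by
      intro a b h
      have h2 : a ≤ 1 / Real.exp (-b) := (le_div_iff₀ (Real.exp_pos (-b))).mpr h
      rwa [Real.exp_neg, one_div, inv_inv] at h2
    have leExp : ∀ a b : ℝ, 1 ≤ a * Real.exp (-b) → Real.exp b ≤ a := by
      intro a b h
      have h2 : 1 / Real.exp (-b) ≤ a := (div_le_iff₀ (Real.exp_pos (-b))).mpr h
      rwa [Real.exp_neg, one_div, inv_inv] at h2
    have hsqrt : ∀ η : ℝ, Real.sqrt (Real.exp (2 * η * s)) = Real.exp (η * s) := by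
      intro η
      rw [show (2 * η * s) = η * s + η * s by ring, Real.exp_add,
        Real.sqrt_mul_self (Real.exp_nonneg _)]
    have F2 := core_antitone hub v
    have hub' : ∀ x : Fin n → ℝ, x ⬝ᵥ ((-M) + (-M)ᵀ) *ᵥ x ≤ (-(2 * η₁)) * (x ⬝ᵥ x) := by
      intro x
      have := hlb x
      have hneg : ((-M) + (-M)ᵀ) = -(M + Mᵀ) := by rw [Matrix.transpose_neg, neg_add]
      rw [hneg, Matrix.neg_mulVec, dotProduct_neg]
      linarith
    have hfun : (fun σ : ℝ => (exp (σ • (-M)) *ᵥ v) ⬝ᵥ (exp (σ • (-M)) *ᵥ v)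
          * Real.exp (-(-(2 * η₁) * σ)))
        = (fun σ : ℝ => (exp ((-σ) • M) *ᵥ v) ⬝ᵥ (exp ((-σ) • M) *ᵥ v)
          * Real.exp (-(2 * η₁ * (-σ)))) := by
      funext σ
      rw [smul_neg, ← neg_smul, show -(-(2 * η₁) * σ) = -(2 * η₁ * -σ) by ring]
    have F1 : Antitone (fun σ : ℝ => (exp ((-σ) • M) *ᵥ v) ⬝ᵥ (exp ((-σ) • M) *ᵥ v)
        * Real.exp (-(2 * η₁ * (-σ)))) := hfun ▸ core_antitone hub' v
    constructor
    · intro hs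
      have hF2 := F2 hs
      simp only [hg0, mul_zero, neg_zero, Real.exp_zero, one_mul, mul_one] at hF2
      have hgub := expLe _ _ hF2
      have hF1 := F1 (show -s ≤ (0:ℝ) by linarith)
      simp only [neg_neg, neg_zero, mul_zero, Real.exp_zero, hg0, one_mul, mul_one] at hF1
      have hglb := leExp _ _ hF1
      refine ⟨?_, ?_⟩
      · rw [hrv, ← hsqrt η₁]
        exact Real.sqrt_le_sqrt hglb
      · rw [hrv, ← hsqrt η₂]
        exact Real.sqrt_le_sqrt hgub
    · intro hs
      have hF2 := F2 hs
      simp only [hg0, mul_zero, neg_zero, Real.exp_zero, one_mul, mul_one] at hF2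
      have hglb := leExp _ _ hF2
      have hF1 := F1 (show (0:ℝ) ≤ -s by linarith)
      simp only [neg_neg, neg_zero, mul_zero, Real.exp_zero, hg0, one_mul, mul_one] at hF1
      have hgub := expLe _ _ hF1
      refine ⟨?_, ?_⟩
      · rw [hrv, ← hsqrt η₂]
        exact Real.sqrt_le_sqrt hglb
      · rw [hrv, ← hsqrt η₁]
        exact Real.sqrt_le_sqrt hgub
  -- nontriviality
  have hn : n ≠ 0 := by
    rintro rfl
    refine spectrum.mem_iff.mp hmin.1 ?_
    rw [Matrix.isUnit_iff_isUnit_det, Matrix.det_isEmpty]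
    exact isUnit_one
  have i0 : Fin n := ⟨0, Nat.pos_of_ne_zero hn⟩
  -- a canonical unit vector
  set u₀ : Fin n → ℝ := Q⁻¹ *ᵥ Pi.single i0 1 with hu₀def
  have hQu₀ : Q *ᵥ u₀ = Pi.single i0 1 := by
    rw [hu₀def, Matrix.mulVec_mulVec, h2, Matrix.one_mulVec]
  have hwu₀ : wnorm P u₀ = 1 := by
    rw [hwnorm, hQu₀]
    have : (Pi.single i0 (1:ℝ)) ⬝ᵥ (Pi.single i0 1) = 1 := by
      simp [dotProduct, Pi.single_apply]
    rw [this, Real.sqrt_one]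
  have hne : ∀ s : ℝ, ∃ r, r ∈ {r : ℝ | ∃ u : Fin n → ℝ,
      wnorm P u = 1 ∧ r = wnorm P (dil G s *ᵥ u)} :=
    fun s => ⟨wnorm P (dil G s *ᵥ u₀), ⟨u₀, hwu₀, rfl⟩⟩
  have hbdd : ∀ s : ℝ, BddBelow {r : ℝ | ∃ u : Fin n → ℝ,
      wnorm P u = 1 ∧ r = wnorm P (dil G s *ᵥ u)} := by
    intro s
    refine ⟨0, fun r hr => ?_⟩
    obtain ⟨u, -, rfl⟩ := hr
    exact Real.sqrt_nonneg _
  refine ⟨⟨hη₁, hη₂⟩, fun s hs => ?_, fun s hs => ?_⟩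
  · have hub' : ∀ r ∈ {r : ℝ | ∃ u : Fin n → ℝ,
        wnorm P u = 1 ∧ r = wnorm P (dil G s *ᵥ u)}, r ≤ Real.exp (η₂ * s) :=
      fun r hr => ((key s r hr).1 hs).2
    refine ⟨?_, ?_, ?_⟩
    · exact le_csInf ⟨_, (hne s).choose_spec⟩ fun b hb => ((key s b hb).1 hs).1
    · exact csInf_le_csSup ⟨_, (hne s).choose_spec⟩ (hbdd s) ⟨_, hub'⟩
    · exact Real.sSup_le hub' (Real.exp_nonneg _)
  · have hub' : ∀ r ∈ {r : ℝ | ∃ u : Fin n → ℝ,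
        wnorm P u = 1 ∧ r = wnorm P (dil G s *ᵥ u)}, r ≤ Real.exp (η₁ * s) :=
      fun r hr => ((key s r hr).2 hs).2
    refine ⟨?_, ?_, ?_⟩
    · exact le_csInf ⟨_, (hne s).choose_spec⟩ fun b hb => ((key s b hb).2 hs).1
    · exact csInf_le_csSup ⟨_, (hne s).choose_spec⟩ (hbdd s) ⟨_, hub'⟩
    · exact Real.sSup_le hub' (Real.exp_nonneg _)
end

section
/- If A G_d = (μI + G_d)A for some μ ≠ 0 and some anti-Hurwitz matrix G_d (generator of a dilation), then A is nilpotent. -/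
open Matrix Module

/-- Auxiliary: if `a g = (μ • 1 + g) a` with `μ ≠ 0` in a finite-dim ℂ-space, `a` is nilpotent. -/
lemma stmt10_aux {V : Type*} [AddCommGroup V] [Module ℂ V] [FiniteDimensional ℂ V]
    (a g : Module.End ℂ V) (μ : ℂ) (hμ : μ ≠ 0)
    (h : a * g = (μ • 1 + g) * a) : IsNilpotent a := by
  have hga : g * a = a * g - μ • a := by
    have : a * g = μ • a + g * a := by
      rw [h, add_mul, smul_mul_assoc, one_mul]
    rw [this]; abel
  have hc : ∀ c : ℂ, (g - c • 1) * a = a * (g - (c + μ) • 1) := by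
    intro c
    have h1 : (g - c • 1) * a = g * a - c • a := by
      rw [sub_mul, smul_mul_assoc, one_mul]
    have h2 : a * (g - (c + μ) • 1) = a * g - (c + μ) • a := by
      rw [mul_sub, mul_smul_comm, mul_one]
    rw [h1, hga, h2, add_smul]; abel
  have hck : ∀ (k : ℕ) (c : ℂ), (g - c • 1) ^ k * a = a * (g - (c + μ) • 1) ^ k := by
    intro k c
    induction k with
    | zero => simp
    | succ k ih =>
      rw [pow_succ, pow_succ, mul_assoc, hc, ← mul_assoc, ih, mul_assoc]
  have step : ∀ (c : ℂ) (v : V), v ∈ g.maxGenEigenspace c →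
      a v ∈ g.maxGenEigenspace (c - μ) := by
    intro c v hv
    rw [Module.End.mem_maxGenEigenspace] at hv ⊢
    obtain ⟨k, hk⟩ := hv
    refine ⟨k, ?_⟩
    have heq := hck k (c - μ)
    rw [sub_add_cancel] at heq
    have h2 : ((g - (c - μ) • 1) ^ k * a) v = (a * (g - c • 1) ^ k) v := by rw [heq]
    simpa [Module.End.mul_apply, hk] using h2
  have iter : ∀ (m : ℕ) (c : ℂ) (v : V), v ∈ g.maxGenEigenspace c →
      (a ^ m) v ∈ g.maxGenEigenspace (c - (m : ℂ) * μ) := by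
    intro m
    induction m with
    | zero => intro c v hv; simpa using hv
    | succ m ih =>
      intro c v hv
      have h1 := step _ _ (ih c v hv)
      rw [pow_succ', Module.End.mul_apply]
      have he : c - ((m : ℂ) + 1) * μ = c - (m : ℂ) * μ - μ := by ring
      rw [show ((m + 1 : ℕ) : ℂ) = (m : ℂ) + 1 by push_cast; ring, he]
      exact h1
  have hfin : (spectrum ℂ g).Finite := Module.End.finite_spectrum g
  set s : Finset ℂ := hfin.toFinset with hs
  set N : ℕ := s.card + 1 with hN
  have hbot : ∀ c : ℂ, c ∉ spectrum ℂ g → g.maxGenEigenspace c = ⊥ := by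
    intro c hcs
    by_contra hb
    exact hcs (Module.End.HasUnifEigenvalue.mem_spectrum
      ((Module.End.HasUnifEigenvalue.lt zero_lt_one) hb))
  have key : ∀ (c : ℂ) (v : V), v ∈ g.maxGenEigenspace c → (a ^ N) v = 0 := by
    intro c v hv
    have hex : ∃ m < N, c - (m : ℂ) * μ ∉ spectrum ℂ g := by
      by_contra hcon
      push_neg at hcon
      have hinj : Set.InjOn (fun m : ℕ => c - (m : ℂ) * μ) (Finset.range N) := by
        intro x _ y _ hxy
        simp only [sub_right_inj] at hxy
        have : (x : ℂ) = y := mul_right_cancel₀ hμ hxy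
        exact_mod_cast this
      have hmaps : ∀ m ∈ Finset.range N, (fun m : ℕ => c - (m : ℂ) * μ) m ∈ s := by
        intro m hm
        rw [hs, Set.Finite.mem_toFinset]
        exact hcon m (Finset.mem_range.mp hm)
      have hcard := Finset.card_le_card_of_injOn _ hmaps hinj
      rw [Finset.card_range] at hcard
      omega
    obtain ⟨m, hmN, hnot⟩ := hex
    have h0 : (a ^ m) v = 0 := by
      have hmem := iter m c v hv
      rw [hbot _ hnot] at hmem
      simpa using hmem
    have hsplit : a ^ N = a ^ (N - m) * a ^ m := by
      rw [← pow_add]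
      congr 1
      omega
    rw [hsplit, Module.End.mul_apply, h0, map_zero]
  refine ⟨N, ?_⟩
  ext v
  have hv : v ∈ ⨆ c : ℂ, g.maxGenEigenspace c := by
    rw [Module.End.iSup_maxGenEigenspace_eq_top]; trivial
  simp only [LinearMap.zero_apply]
  exact Submodule.iSup_induction (motive := fun w => (a ^ N) w = 0) _ hv key (map_zero _)
    (fun x y hx hy => by show (a ^ N) (x + y) = 0; rw [map_add]; rw [show (a^N) x = 0 from hx, show (a^N) y = 0 from hy, add_zero])

/-- if `A G_d = (μI + G_d) A` for some `μ ≠ 0` and some anti-Hurwitz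
matrix `G_d`, then `A` is nilpotent. -/
theorem stmt10 {n : ℕ} (A Gd : Matrix (Fin n) (Fin n) ℝ) (μ : ℝ) (hμ : μ ≠ 0)
    (hG : ∀ z ∈ spectrum ℂ (Gd.map Complex.ofReal), 0 < z.re)
    (h : A * Gd = (μ • (1 : Matrix (Fin n) (Fin n) ℝ) + Gd) * A) :
    IsNilpotent A := by
  let φ : Matrix (Fin n) (Fin n) ℝ →+* Matrix (Fin n) (Fin n) ℂ :=
    (Complex.ofRealHom : ℝ →+* ℂ).mapMatrix
  have hφ : ∀ M : Matrix (Fin n) (Fin n) ℝ, φ M = M.map Complex.ofReal := fun M => rfl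
  have hmap : φ A * φ Gd = ((μ : ℂ) • 1 + φ Gd) * φ A := by
    have h1 : φ (A * Gd) = φ ((μ • (1 : Matrix (Fin n) (Fin n) ℝ) + Gd) * A) := by rw [h]
    rw [_root_.map_mul, _root_.map_mul, map_add] at h1
    have h2 : φ (μ • (1 : Matrix (Fin n) (Fin n) ℝ)) = (μ : ℂ) • 1 := by
      ext i j
      simp [φ, RingHom.mapMatrix_apply, Matrix.map_apply, Matrix.smul_apply, Matrix.one_apply]
      split_ifs <;> simp
    rw [h2] at h1
    exact h1
  let e := Matrix.toLinAlgEquiv' (R := ℂ) (n := Fin n)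
  have hend : (e (φ A)) * (e (φ Gd)) = ((μ : ℂ) • 1 + e (φ Gd)) * (e (φ A)) := by
    rw [← _root_.map_mul, hmap, _root_.map_mul, map_add, _root_.map_smul, _root_.map_one]
  have hnil : IsNilpotent (e (φ A)) := stmt10_aux (e (φ A)) (e (φ Gd)) (μ : ℂ)
    (by exact_mod_cast hμ) hend
  obtain ⟨k, hk⟩ := hnil
  refine ⟨k, ?_⟩
  have hk' : φ (A ^ k) = 0 := by
    apply e.injective
    rw [map_zero, _root_.map_pow, _root_.map_pow, hk]
  ext i j
  have hentry := congrFun (congrFun (congrArg (fun M => (M : Matrix (Fin n) (Fin n) ℂ)) hk') i) j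
  simp only [hφ, Matrix.map_apply, Matrix.zero_apply] at hentry
  exact_mod_cast hentry
end

section
/- With the component-wise logarithmic quantizer 𝔮 in diagonalizing coordinates: for any ε > 0 there exists δ > 0 (quantizer parameter) such that ‖𝔮(x) - x‖_d ≤ ε‖x‖_d for all x ∈ ℝⁿ, where ‖·‖_d is the canonical homogeneous norm. -/
open Matrix NormedSpace

attribute [local instance] Matrix.linftyOpNormedRing Matrix.linftyOpNormedAlgebra

namespace Stmt14Aux

variable {n : ℕ}

lemma dot_le (u v : Fin n → ℝ) : u ⬝ᵥ v ≤ (n : ℝ) * (‖u‖ * ‖v‖) := by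
  have h : ∀ i : Fin n, u i * v i ≤ ‖u‖ * ‖v‖ := by
    intro i
    calc u i * v i ≤ |u i * v i| := le_abs_self _
      _ = |u i| * |v i| := abs_mul _ _
      _ ≤ ‖u‖ * ‖v‖ := by
          apply mul_le_mul (norm_le_pi_norm u i) (norm_le_pi_norm v i) (abs_nonneg _)
            (norm_nonneg _)
  calc u ⬝ᵥ v = ∑ i, u i * v i := rfl
    _ ≤ ∑ _i : Fin n, ‖u‖ * ‖v‖ := Finset.sum_le_sum fun i _ => h i
    _ = (n : ℝ) * (‖u‖ * ‖v‖) := by simp [Finset.sum_const, nsmul_eq_mul]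

lemma quad_upper (P : Matrix (Fin n) (Fin n) ℝ) (v : Fin n → ℝ) :
    v ⬝ᵥ P *ᵥ v ≤ ((n : ℝ) * ‖P‖) * ‖v‖ ^ 2 := by
  calc v ⬝ᵥ P *ᵥ v ≤ (n : ℝ) * (‖v‖ * ‖P *ᵥ v‖) := dot_le _ _
    _ ≤ (n : ℝ) * (‖v‖ * (‖P‖ * ‖v‖)) := by
        gcongr
        exact Matrix.linfty_opNorm_mulVec _ _
    _ = ((n : ℝ) * ‖P‖) * ‖v‖ ^ 2 := by ring

lemma quad_lower {P : Matrix (Fin n) (Fin n) ℝ} (hP : P.PosDef) :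
    ∃ c : ℝ, 0 < c ∧ ∀ v : Fin n → ℝ, c * ‖v‖ ^ 2 ≤ v ⬝ᵥ P *ᵥ v := by
  rcases isEmpty_or_nonempty (Fin n) with hE | hNE
  · refine ⟨1, one_pos, fun v => ?_⟩
    have hv : v = 0 := Subsingleton.elim _ _
    subst hv
    simp
  · have hcont : Continuous fun v : Fin n → ℝ => v ⬝ᵥ P *ᵥ v := by
      simp only [dotProduct, mulVec]
      fun_prop
    have hsph : IsCompact (Metric.sphere (0 : Fin n → ℝ) 1) := isCompact_sphere _ _
    have hne : (Metric.sphere (0 : Fin n → ℝ) 1).Nonempty :=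
      NormedSpace.sphere_nonempty.mpr zero_le_one
    obtain ⟨v₀, hv₀mem, hmin⟩ := hsph.exists_isMinOn hne hcont.continuousOn
    have hv₀ : ‖v₀‖ = 1 := by simpa using hv₀mem
    have hv₀ne : v₀ ≠ 0 := by
      intro h; rw [h] at hv₀; simp at hv₀
    have hcpos : 0 < v₀ ⬝ᵥ P *ᵥ v₀ := by
      have := hP.dotProduct_mulVec_pos hv₀ne
      simpa using this
    refine ⟨v₀ ⬝ᵥ P *ᵥ v₀, hcpos, fun v => ?_⟩
    by_cases hv : v = 0
    · subst hv; simp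
    · have ha : (0 : ℝ) < ‖v‖ := norm_pos_iff.mpr hv
      set a : ℝ := ‖v‖ with hadef
      have hu : ‖a⁻¹ • v‖ = 1 := by
        rw [norm_smul]
        simp [hadef, abs_of_pos (inv_pos.mpr ha), inv_mul_cancel₀ (ne_of_gt ha)]
        exact inv_mul_cancel₀ (ne_of_gt ha)
      have humem : a⁻¹ • v ∈ Metric.sphere (0 : Fin n → ℝ) 1 := by
        simpa using hu
      have hmin' := hmin humem
      have hval : (a⁻¹ • v) ⬝ᵥ P *ᵥ (a⁻¹ • v) = a⁻¹ * a⁻¹ * (v ⬝ᵥ P *ᵥ v) := by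
        rw [Matrix.mulVec_smul, dotProduct_smul, smul_dotProduct]
        simp [smul_eq_mul]; ring
      have h2 : v₀ ⬝ᵥ P *ᵥ v₀ ≤ a⁻¹ * a⁻¹ * (v ⬝ᵥ P *ᵥ v) := by
        simpa [hval] using hmin'
      have ha2 : (0:ℝ) < a ^ 2 := by positivity
      have han : a ≠ 0 := ne_of_gt ha
      have heq : a⁻¹ * a⁻¹ * (v ⬝ᵥ P *ᵥ v) * a ^ 2 = v ⬝ᵥ P *ᵥ v := by
        rw [sq]; field_simp
      have h3 := mul_le_mul_of_nonneg_right h2 ha2.le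
      rw [heq] at h3
      calc (v₀ ⬝ᵥ P *ᵥ v₀) * ‖v‖ ^ 2 = (v₀ ⬝ᵥ P *ᵥ v₀) * a ^ 2 := by rw [← hadef]
        _ ≤ v ⬝ᵥ P *ᵥ v := h3

lemma wnorm_le (P : Matrix (Fin n) (Fin n) ℝ) (v : Fin n → ℝ) :
    wnorm P v ≤ Real.sqrt ((n : ℝ) * ‖P‖) * ‖v‖ := by
  rw [wnorm]
  calc Real.sqrt (v ⬝ᵥ P *ᵥ v) ≤ Real.sqrt (((n : ℝ) * ‖P‖) * ‖v‖ ^ 2) :=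
        Real.sqrt_le_sqrt (quad_upper P v)
    _ = Real.sqrt ((n : ℝ) * ‖P‖) * ‖v‖ := by
        rw [Real.sqrt_mul (by positivity)]
        congr 1
        rw [Real.sqrt_sq (norm_nonneg _)]

lemma le_wnorm (P : Matrix (Fin n) (Fin n) ℝ) {c : ℝ} (hc : 0 < c)
    (h : ∀ v : Fin n → ℝ, c * ‖v‖ ^ 2 ≤ v ⬝ᵥ P *ᵥ v) (v : Fin n → ℝ) :
    Real.sqrt c * ‖v‖ ≤ wnorm P v := by
  rw [wnorm]
  calc Real.sqrt c * ‖v‖ = Real.sqrt (c * ‖v‖ ^ 2) := by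
        rw [Real.sqrt_mul hc.le]
        congr 1
        rw [Real.sqrt_sq (norm_nonneg _)]
    _ ≤ Real.sqrt (v ⬝ᵥ P *ᵥ v) := Real.sqrt_le_sqrt (h v)

/-- the derivative of the quadratic form along the dilation -/
lemma quad_hasDerivAt (P Gd : Matrix (Fin n) (Fin n) ℝ) (y : Fin n → ℝ) (s : ℝ) :
    HasDerivAt (fun t => (dil Gd t *ᵥ y) ⬝ᵥ P *ᵥ (dil Gd t *ᵥ y))
      ((dil Gd s *ᵥ y) ⬝ᵥ ((Gdᵀ * P + P * Gd) *ᵥ (dil Gd s *ᵥ y))) s := by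
  have hM : HasDerivAt (fun t : ℝ => exp (t • Gd)) (Gd * exp (s • Gd)) s :=
    hasDerivAt_exp_smul_const' Gd s
  -- the continuous linear map A ↦ A *ᵥ y
  let L : Matrix (Fin n) (Fin n) ℝ →ₗ[ℝ] (Fin n → ℝ) :=
    { toFun := fun A => A *ᵥ y
      map_add' := fun A B => Matrix.add_mulVec A B y
      map_smul' := fun c A => (Matrix.smul_mulVec c A y) }
  have hz : HasDerivAt (fun t => dil Gd t *ᵥ y) (Gd *ᵥ (dil Gd s *ᵥ y)) s := by
    have := (L.toContinuousLinearMap.hasFDerivAt (x := exp (s • Gd))).comp_hasDerivAt s hM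
    simp only [dil, Matrix.mulVec_mulVec]; exact this
  set z : ℝ → (Fin n → ℝ) := fun t => dil Gd t *ᵥ y with hzdef
  set w : Fin n → ℝ := Gd *ᵥ (dil Gd s *ᵥ y) with hwdef
  have hzi : ∀ i : Fin n, HasDerivAt (fun t => z t i) (w i) s := fun i =>
    hasDerivAt_pi.mp hz i
  have key : HasDerivAt (fun t => ∑ i, ∑ j, z t i * (P i j * z t j))
      (∑ i, ∑ j, (w i * (P i j * z s j) + z s i * (P i j * w j))) s := by
    apply HasDerivAt.fun_sum
    intro i _
    apply HasDerivAt.fun_sum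
    intro j _
    exact (hzi i).mul ((hzi j).const_mul (P i j))
  have hfun : (fun t => ∑ i, ∑ j, z t i * (P i j * z t j))
      = fun t => (dil Gd t *ᵥ y) ⬝ᵥ P *ᵥ (dil Gd t *ᵥ y) := by
    funext t
    simp only [dotProduct, mulVec, Finset.mul_sum, hzdef]
  have hder : (∑ i, ∑ j, (w i * (P i j * z s j) + z s i * (P i j * w j)))
      = (dil Gd s *ᵥ y) ⬝ᵥ ((Gdᵀ * P + P * Gd) *ᵥ (dil Gd s *ᵥ y)) := by
    have h1 : z s ⬝ᵥ ((Gdᵀ * P) *ᵥ z s) = w ⬝ᵥ (P *ᵥ z s) := by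
      rw [← Matrix.mulVec_mulVec, Matrix.dotProduct_mulVec, Matrix.vecMul_transpose]
    have h2 : z s ⬝ᵥ ((P * Gd) *ᵥ z s) = z s ⬝ᵥ (P *ᵥ w) := by
      rw [← Matrix.mulVec_mulVec, hwdef, hzdef]
    rw [Matrix.add_mulVec, dotProduct_add, h1, h2]
    simp only [dotProduct, mulVec, Finset.mul_sum, Finset.sum_add_distrib, hzdef, hwdef]
  rw [← hfun, ← hder]
  exact key

lemma quad_mono {P Gd : Matrix (Fin n) (Fin n) ℝ}
    (hmon : (P * Gd + Gdᵀ * P).PosDef) (y : Fin n → ℝ) :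
    Monotone (fun s => wnorm P (dil Gd s *ᵥ y)) := by
  have hq : Monotone (fun s => (dil Gd s *ᵥ y) ⬝ᵥ P *ᵥ (dil Gd s *ᵥ y)) := by
    apply monotone_of_deriv_nonneg
    · exact fun s => (quad_hasDerivAt P Gd y s).differentiableAt
    · intro s
      rw [(quad_hasDerivAt P Gd y s).deriv]
      have := hmon.posSemidef.dotProduct_mulVec_nonneg (dil Gd s *ᵥ y)
      have hcomm : Gdᵀ * P + P * Gd = P * Gd + Gdᵀ * P := add_comm _ _
      rw [hcomm]
      simpa using this
  intro a b hab
  exact Real.sqrt_le_sqrt (hq hab)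

lemma dil_mul (Gd : Matrix (Fin n) (Fin n) ℝ) (a b : ℝ) :
    dil Gd (a + b) = dil Gd a * dil Gd b := by
  rw [dil, dil, dil, add_smul]
  exact NormedSpace.exp_add_of_commute (Commute.smul_left (Commute.smul_right (Commute.refl Gd) b) a)

end Stmt14Aux

open Stmt14Aux

set_option maxHeartbeats 1000000 in
/-- Corollary 2: for the component-wise logarithmic quantizer in
diagonalizing coordinates, for any `ε > 0` there is a quantizer parameter `δ > 0` such
that `‖𝔮(x) - x‖_d ≤ ε‖x‖_d` for all `x`. -/
theorem stmt14 {n : ℕ} (P Gd Γ Λ : Matrix (Fin n) (Fin n) ℝ) (hP : P.PosDef)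
    (hmon : (P * Gd + Gdᵀ * P).PosDef)
    (hΓ : IsUnit Γ.det) (hfac : Gd = Γ * Λ * Γ⁻¹)
    (hΛdiag : ∀ i j : Fin n, i ≠ j → Λ i j = 0) (hΛpos : ∀ i : Fin n, 0 < Λ i i)
    (hnd : (Fin n → ℝ) → ℝ) (hnd0 : hnd 0 = 0)
    (hndpos : ∀ x : Fin n → ℝ, x ≠ 0 → 0 < hnd x)
    (hnddef : ∀ x : Fin n → ℝ, x ≠ 0 → wnorm P (dil Gd (-(Real.log (hnd x))) *ᵥ x) = 1) :
    ∀ ε : ℝ, 0 < ε → ∃ δ : ℝ, 0 < δ ∧ ∀ q : ℝ → ℝ,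
      (∀ φ : ℝ, |q φ - φ| ≤ δ * |φ|) →
      ∀ x : Fin n → ℝ,
        hnd (Γ *ᵥ (fun i => q ((Γ⁻¹ *ᵥ x) i)) - x) ≤ ε * hnd x := by
  intro ε hε
  obtain ⟨c₁, hc₁, hc₁le⟩ := quad_lower hP
  have hsc₁ : (0:ℝ) < Real.sqrt c₁ := Real.sqrt_pos.mpr hc₁
  -- norm-comparison constant for a matrix A acting in the wnorm
  set cP : ℝ := Real.sqrt ((n : ℝ) * ‖P‖) with hcP
  have hcP0 : 0 ≤ cP := Real.sqrt_nonneg _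
  have hᵥ : ∀ (A : Matrix (Fin n) (Fin n) ℝ) (v : Fin n → ℝ),
      wnorm P (A *ᵥ v) ≤ (cP * ‖A‖ / Real.sqrt c₁) * wnorm P v := by
    intro A v
    calc wnorm P (A *ᵥ v) ≤ cP * ‖A *ᵥ v‖ := wnorm_le P _
      _ ≤ cP * (‖A‖ * ‖v‖) := by gcongr; exact Matrix.linfty_opNorm_mulVec _ _
      _ = (cP * ‖A‖ / Real.sqrt c₁) * (Real.sqrt c₁ * ‖v‖) := by
          field_simp
      _ ≤ (cP * ‖A‖ / Real.sqrt c₁) * wnorm P v :=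
          mul_le_mul_of_nonneg_left (le_wnorm P hc₁ hc₁le v) (by positivity)
  -- the conjugated dilation is diagonal
  have hΓu : IsUnit Γ := (Matrix.isUnit_iff_isUnit_det Γ).mpr hΓ
  have hGi : Γ * Γ⁻¹ = 1 := Matrix.mul_nonsing_inv Γ hΓ
  have hIG : Γ⁻¹ * Γ = 1 := Matrix.nonsing_inv_mul Γ hΓ
  set D : ℝ → Matrix (Fin n) (Fin n) ℝ :=
    fun s => Matrix.diagonal (fun i => Real.exp (s * Λ i i)) with hD
  have hΛeq : Λ = Matrix.diagonal (fun i => Λ i i) := by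
    ext i j
    by_cases h : i = j
    · subst h; simp
    · rw [Matrix.diagonal_apply_ne _ h]; exact hΛdiag i j h
  have hdil : ∀ s : ℝ, dil Gd s = Γ * D s * Γ⁻¹ := by
    intro s
    have h1 : s • Gd = Γ * (s • Λ) * Γ⁻¹ := by
      rw [hfac, Matrix.mul_smul, Matrix.smul_mul]
    rw [dil, h1, Matrix.exp_conj Γ (s • Λ) hΓu]
    congr 1
    congr 1
    rw [hΛeq]
    have : s • Matrix.diagonal (fun i => Λ i i)
        = Matrix.diagonal (fun i => s * Λ i i) := by
      rw [← Matrix.diagonal_smul]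
      congr 1
    have hexp : exp (fun i => s * Λ i i) = fun i => Real.exp (s * Λ i i) := by
      rw [Pi.exp_def]
      funext i
      exact (congr_fun Real.exp_eq_exp_ℝ (s * Λ i i)).symm
    rw [this, Matrix.exp_diagonal, hexp, hD]
  -- constants
  set K : ℝ := cP * ‖Γ‖ * ‖Γ⁻¹‖ / Real.sqrt c₁ with hK
  have hK0 : 0 ≤ K := by positivity
  set Cε : ℝ := cP * ‖dil Gd (-Real.log ε)‖ / Real.sqrt c₁ with hCε
  have hCε0 : 0 ≤ Cε := by positivity
  refine ⟨1 / (K * Cε + 1), by positivity, ?_⟩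
  set δ : ℝ := 1 / (K * Cε + 1) with hδ
  have hδ0 : 0 < δ := by positivity
  intro q hq x
  set ξ : Fin n → ℝ := Γ⁻¹ *ᵥ x with hξ
  set y : Fin n → ℝ := Γ *ᵥ (fun i => q (ξ i)) - x with hy
  show hnd y ≤ ε * hnd x
  by_cases hx : x = 0
  · have hq0 : q 0 = 0 := by
      have := hq 0
      simp at this
      linarith [abs_nonneg (q 0), this]
    have hξ0 : ξ = 0 := by rw [hξ, hx, Matrix.mulVec_zero]
    have hy0 : y = 0 := by
      rw [hy, hξ0, hx]
      simp [hq0]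
      exact Matrix.mulVec_zero Γ
    rw [hy0, hx, hnd0]
    simp
  · have hxpos : 0 < hnd x := hndpos x hx
    by_cases hy0 : y = 0
    · rw [hy0, hnd0]; positivity
    · have hypos : 0 < hnd y := hndpos y hy0
      -- error vector
      set e : Fin n → ℝ := (fun i => q (ξ i)) - ξ with he
      have hye : y = Γ *ᵥ e := by
        rw [hy, he, Matrix.mulVec_sub]
        congr 1
        rw [hξ, Matrix.mulVec_mulVec, hGi, Matrix.one_mulVec]
      have hei : ∀ i, |e i| ≤ δ * |ξ i| := by
        intro i
        simpa [he] using hq (ξ i)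
      -- key pointwise bound along dilations
      have hkey : ∀ s : ℝ, wnorm P (dil Gd s *ᵥ y) ≤ δ * K * wnorm P (dil Gd s *ᵥ x) := by
        intro s
        have hcomm : dil Gd s * Γ = Γ * D s := by
          rw [hdil s, mul_assoc (Γ * D s) Γ⁻¹ Γ, hIG, mul_one]
        have hcomm2 : Γ⁻¹ * dil Gd s = D s * Γ⁻¹ := by
          rw [hdil s, ← mul_assoc, ← mul_assoc, hIG, one_mul]
        have hDy : dil Gd s *ᵥ y = Γ *ᵥ (D s *ᵥ e) := by
          rw [hye, Matrix.mulVec_mulVec, hcomm, ← Matrix.mulVec_mulVec]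
        have hDξ : D s *ᵥ ξ = Γ⁻¹ *ᵥ (dil Gd s *ᵥ x) := by
          rw [hξ, Matrix.mulVec_mulVec, ← hcomm2, ← Matrix.mulVec_mulVec]
        have hDe : ‖D s *ᵥ e‖ ≤ δ * ‖D s *ᵥ ξ‖ := by
          apply pi_norm_le_iff_of_nonneg (by positivity) |>.mpr
          intro i
          rw [Matrix.mulVec_diagonal]
          have h1 : ‖Real.exp (s * Λ i i) * e i‖ = Real.exp (s * Λ i i) * |e i| := by
            rw [Real.norm_eq_abs, abs_mul, abs_of_pos (Real.exp_pos _)]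
          rw [h1]
          calc Real.exp (s * Λ i i) * |e i| ≤ Real.exp (s * Λ i i) * (δ * |ξ i|) := by
                gcongr; exact hei i
            _ = δ * |Real.exp (s * Λ i i) * ξ i| := by
                rw [abs_mul, abs_of_pos (Real.exp_pos _)]; ring
            _ = δ * ‖(D s *ᵥ ξ) i‖ := by rw [Matrix.mulVec_diagonal]; rfl
            _ ≤ δ * ‖D s *ᵥ ξ‖ := by gcongr; exact norm_le_pi_norm _ i
        calc wnorm P (dil Gd s *ᵥ y) = wnorm P (Γ *ᵥ (D s *ᵥ e)) := by rw [hDy]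
          _ ≤ cP * ‖Γ *ᵥ (D s *ᵥ e)‖ := wnorm_le P _
          _ ≤ cP * (‖Γ‖ * ‖D s *ᵥ e‖) := by gcongr; exact Matrix.linfty_opNorm_mulVec _ _
          _ ≤ cP * (‖Γ‖ * (δ * ‖D s *ᵥ ξ‖)) := by gcongr
          _ = cP * (‖Γ‖ * (δ * ‖Γ⁻¹ *ᵥ (dil Gd s *ᵥ x)‖)) := by rw [hDξ]
          _ ≤ cP * (‖Γ‖ * (δ * (‖Γ⁻¹‖ * ‖dil Gd s *ᵥ x‖))) := by
              gcongr; exact Matrix.linfty_opNorm_mulVec _ _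
          _ = δ * K * (Real.sqrt c₁ * ‖dil Gd s *ᵥ x‖) := by
              rw [hK]; field_simp
          _ ≤ δ * K * wnorm P (dil Gd s *ᵥ x) :=
              mul_le_mul_of_nonneg_left (le_wnorm P hc₁ hc₁le _) (by positivity)
      -- evaluate at s₁ = -log (ε * hnd x)
      have hεx : (0:ℝ) < ε * hnd x := by positivity
      have hlog : -Real.log (ε * hnd x) = -Real.log ε + -(Real.log (hnd x)) := by
        rw [Real.log_mul (ne_of_gt hε) (ne_of_gt hxpos)]; ring
      have hs1y : wnorm P (dil Gd (-Real.log (ε * hnd x)) *ᵥ y) < 1 := by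
        have hsplit : dil Gd (-Real.log (ε * hnd x)) *ᵥ y
            = dil Gd (-Real.log ε) *ᵥ (dil Gd (-(Real.log (hnd x))) *ᵥ y) := by
          rw [hlog, dil_mul, Matrix.mulVec_mulVec]
        calc wnorm P (dil Gd (-Real.log (ε * hnd x)) *ᵥ y)
            = wnorm P (dil Gd (-Real.log ε) *ᵥ (dil Gd (-(Real.log (hnd x))) *ᵥ y)) := by
              rw [hsplit]
          _ ≤ Cε * wnorm P (dil Gd (-(Real.log (hnd x))) *ᵥ y) := hᵥ _ _
          _ ≤ Cε * (δ * K * wnorm P (dil Gd (-(Real.log (hnd x))) *ᵥ x)) := by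
              gcongr; exact hkey _
          _ = Cε * (δ * K * 1) := by rw [hnddef x hx]
          _ = K * Cε * δ := by ring
          _ < 1 := by
              rw [hδ, mul_one_div, div_lt_one (by positivity)]
              linarith
      have hmono := quad_mono hmon y
      have hs0 : wnorm P (dil Gd (-(Real.log (hnd y))) *ᵥ y) = 1 := hnddef y hy0
      have hlt : -Real.log (ε * hnd x) < -(Real.log (hnd y)) := by
        by_contra hcon
        push_neg at hcon
        have hmle : wnorm P (dil Gd (-(Real.log (hnd y))) *ᵥ y)
            ≤ wnorm P (dil Gd (-Real.log (ε * hnd x)) *ᵥ y) := hmono hcon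
        rw [hs0] at hmle
        linarith
      have hloglt : Real.log (hnd y) < Real.log (ε * hnd x) := by linarith
      have := (Real.log_lt_log_iff hypos hεx).mp hloglt
      linarith
end

section
/- If the matrix equations A G₀ + B Y₀ = G₀ A + A and G₀ B = 0 hold, and K₀ = Y₀(G₀ - I)⁻¹ with G₀ - I invertible, then with A₀ = A + BK₀ and G_d = I + μG₀: A₀ d(s) = e^{μs} d(s) A₀ and d(s)B = e^s B for all s ∈ ℝ, where d(s) = exp(sG_d). -/
open Matrix NormedSpace

open Nat
lemma aux_exp_mul_of_mul_smul {n m : ℕ} (X : Matrix (Fin n) (Fin n) ℝ)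
    (B : Matrix (Fin n) (Fin m) ℝ) (c : ℝ) (h : X * B = c • B) :
    NormedSpace.exp X * B = Real.exp c • B := by
  letI : NormedRing (Matrix (Fin n) (Fin n) ℝ) := Matrix.linftyOpNormedRing
  letI : NormedAlgebra ℝ (Matrix (Fin n) (Fin n) ℝ) := Matrix.linftyOpNormedAlgebra
  have hpow : ∀ k : ℕ, X ^ k * B = c ^ k • B := by
    intro k
    induction k with
    | zero => simp
    | succ k ih =>
        rw [pow_succ, Matrix.mul_assoc, h, Matrix.mul_smul, ih, smul_smul, mul_comm c, ← pow_succ]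
  have hsum : Summable fun k : ℕ => ((k ! : ℝ))⁻¹ • X ^ k := expSeries_summable' X
  let f : Matrix (Fin n) (Fin n) ℝ →ₗ[ℝ] Matrix (Fin n) (Fin m) ℝ :=
    { toFun := fun M => M * B
      map_add' := fun a b => Matrix.add_mul a b B
      map_smul' := fun r a => Matrix.smul_mul r a B }
  have key : NormedSpace.exp X * B = ∑' k : ℕ, (((k ! : ℝ))⁻¹ • X ^ k) * B := by
    rw [exp_eq_tsum ℝ]
    exact (f.toContinuousLinearMap.map_tsum hsum)
  rw [key]
  have : ∀ k : ℕ, (((k ! : ℝ))⁻¹ • X ^ k) * B = (c ^ k / k !) • B := by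
    intro k
    rw [Matrix.smul_mul, hpow, smul_smul, inv_mul_eq_div]
  simp_rw [this]
  rw [Summable.tsum_smul_const (Real.summable_pow_div_factorial c)]
  congr 1
  rw [Real.exp_eq_exp_ℝ, exp_eq_tsum_div]

lemma aux_mul_exp_of_swap {n : ℕ} (P X Y : Matrix (Fin n) (Fin n) ℝ) (h : P * X = Y * P) :
    P * NormedSpace.exp X = NormedSpace.exp Y * P := by
  letI : NormedRing (Matrix (Fin n) (Fin n) ℝ) := Matrix.linftyOpNormedRing
  letI : NormedAlgebra ℝ (Matrix (Fin n) (Fin n) ℝ) := Matrix.linftyOpNormedAlgebra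
  have hpow : ∀ k : ℕ, P * X ^ k = Y ^ k * P := by
    intro k
    induction k with
    | zero => simp
    | succ k ih =>
        rw [pow_succ, ← mul_assoc, ih, mul_assoc, h, ← mul_assoc, ← pow_succ]
  have key1 : P * NormedSpace.exp X = ∑' k : ℕ, P * (((k ! : ℝ))⁻¹ • X ^ k) := by
    rw [exp_eq_tsum ℝ]
    exact ((LinearMap.mulLeft ℝ P).toContinuousLinearMap.map_tsum (expSeries_summable' X))
  have key2 : NormedSpace.exp Y * P = ∑' k : ℕ, (((k ! : ℝ))⁻¹ • Y ^ k) * P := by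
    rw [exp_eq_tsum ℝ]
    exact ((LinearMap.mulRight ℝ P).toContinuousLinearMap.map_tsum (expSeries_summable' Y))
  rw [key1, key2]
  congr 1
  ext1 k
  rw [Matrix.mul_smul, Matrix.smul_mul, hpow]


theorem stmt16_aux {n m : ℕ} (A G₀ : Matrix (Fin n) (Fin n) ℝ)
    (B : Matrix (Fin n) (Fin m) ℝ) (Y₀ : Matrix (Fin m) (Fin n) ℝ) (μ : ℝ)
    (h1 : A * G₀ + B * Y₀ = G₀ * A + A) (h2 : G₀ * B = 0)
    (hinv : IsUnit (G₀ - 1)) :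
    ∀ s : ℝ,
      (A + B * (Y₀ * (G₀ - 1)⁻¹)) * NormedSpace.exp (s • (1 + μ • G₀)) =
        Real.exp (μ * s) • (NormedSpace.exp (s • (1 + μ • G₀)) * (A + B * (Y₀ * (G₀ - 1)⁻¹))) ∧
      NormedSpace.exp (s • (1 + μ • G₀)) * B = Real.exp s • B := by
  intro s
  set K : Matrix (Fin m) (Fin n) ℝ := Y₀ * (G₀ - 1)⁻¹ with hK
  have hdet : IsUnit (G₀ - 1).det := (Matrix.isUnit_iff_isUnit_det _).mp hinv
  have hKG : K * (G₀ - 1) = Y₀ := by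
    rw [hK, Matrix.mul_assoc, Matrix.nonsing_inv_mul _ hdet, Matrix.mul_one]
  set A₀ : Matrix (Fin n) (Fin n) ℝ := A + B * K with hA₀
  have hBKG : B * K * G₀ = B * Y₀ + B * K := by
    have h : B * (K * (G₀ - 1)) = B * Y₀ := by rw [hKG]
    rw [Matrix.mul_sub, Matrix.mul_one, Matrix.mul_sub, ← Matrix.mul_assoc] at h
    rw [← h]; abel
  have h3 : A₀ * G₀ = G₀ * A₀ + A₀ := by
    have hGBK : G₀ * (B * K) = 0 := by rw [← Matrix.mul_assoc, h2, Matrix.zero_mul]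
    rw [hA₀, Matrix.add_mul, Matrix.mul_add, hBKG, hGBK, add_zero, ← add_assoc, h1, add_assoc]
  have hswap : A₀ * (s • (1 + μ • G₀)) =
      (s • (1 + μ • G₀) + (μ * s) • (1 : Matrix (Fin n) (Fin n) ℝ)) * A₀ := by
    simp only [Matrix.mul_smul, Matrix.smul_mul, Matrix.mul_add, Matrix.add_mul,
      Matrix.mul_one, Matrix.one_mul, h3, smul_add, smul_smul]
    rw [mul_comm s μ]
    abel
  have p1 := aux_mul_exp_of_swap A₀ (s • (1 + μ • G₀)) _ hswap
  have hcomm : Commute (s • (1 + μ • G₀)) ((μ * s) • (1 : Matrix (Fin n) (Fin n) ℝ)) :=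
    ((Commute.one_right _).smul_right _)
  have hsplit := Matrix.exp_add_of_commute _ _ hcomm
  have hexp1 : NormedSpace.exp ((μ * s) • (1 : Matrix (Fin n) (Fin n) ℝ)) =
      Real.exp (μ * s) • 1 := by
    have := aux_exp_mul_of_mul_smul ((μ * s) • (1 : Matrix (Fin n) (Fin n) ℝ)) (1 : Matrix (Fin n) (Fin n) ℝ) (μ * s)
      (by rw [Matrix.smul_mul, Matrix.one_mul])
    simpa using this
  constructor
  · rw [p1, hsplit, hexp1, Matrix.mul_smul, Matrix.mul_one, Matrix.smul_mul]
  · have hGB : (s • (1 + μ • G₀)) * B = s • B := by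
      rw [Matrix.smul_mul, Matrix.add_mul, Matrix.one_mul, Matrix.smul_mul, h2, smul_zero,
        add_zero]
    exact aux_exp_mul_of_mul_smul _ B s hGB

/-- if `AG₀ + BY₀ = G₀A + A` and `G₀B = 0`, with `K₀ = Y₀(G₀ - I)⁻¹`
(`G₀ - I` invertible), `A₀ = A + BK₀` and `G_d = I + μG₀`, then
`A₀ d(s) = e^{μs} d(s) A₀` and `d(s)B = e^s B` for all `s`. -/
theorem stmt16 {n m : ℕ} (A G₀ : Matrix (Fin n) (Fin n) ℝ)
    (B : Matrix (Fin n) (Fin m) ℝ) (Y₀ : Matrix (Fin m) (Fin n) ℝ) (μ : ℝ)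
    (h1 : A * G₀ + B * Y₀ = G₀ * A + A) (h2 : G₀ * B = 0)
    (hinv : IsUnit (G₀ - 1)) :
    ∀ s : ℝ,
      (A + B * (Y₀ * (G₀ - 1)⁻¹)) * dil (1 + μ • G₀) s =
        Real.exp (μ * s) • (dil (1 + μ • G₀) s * (A + B * (Y₀ * (G₀ - 1)⁻¹))) ∧
      dil (1 + μ • G₀) s * B = Real.exp s • B := by
  intro s
  unfold dil
  exact stmt16_aux A G₀ B Y₀ μ h1 h2 hinv s
end

section
/- Suppose a continuous function V : ℝⁿ → ℝ≥0 is positive definite, radially unbounded, and its trajectories satisfy dV/dt ≤ -c·V^{1+μ} with c > 0 and μ < 0 along solutions. Then every solution reaches the origin in finite time, with settling time T(x₀) ≤ V(x₀)^{-μ}/(c·(-μ)). -/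
open Set Filter Topology

/-- scalar finite-time comparison lemma: if `V ≥ 0` is continuous and
satisfies `V' ≤ -c V^{1+μ}` (whenever `V > 0`, `t ≥ 0`) with `c > 0` and `-1 ≤ μ < 0`,
then `V` vanishes for all `t ≥ V(0)^{-μ}/(c·(-μ))`. -/
theorem stmt17 (c μ : ℝ) (hc : 0 < c) (hμ1 : -1 ≤ μ) (hμ : μ < 0)
    (V : ℝ → ℝ) (hcont : Continuous V) (hnn : ∀ t : ℝ, 0 ≤ V t)
    (hdiff : ∀ t : ℝ, 0 ≤ t → 0 < V t →
      DifferentiableAt ℝ V t ∧ deriv V t ≤ -c * V t ^ (1 + μ)) :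
    ∀ t : ℝ, V 0 ^ (-μ) / (c * (-μ)) ≤ t → V t = 0 := by
  have hν : 0 < -μ := neg_pos.2 hμ
  have hcν : 0 < c * -μ := mul_pos hc hν
  have hWcont : Continuous (fun t => V t ^ (-μ)) :=
    hcont.rpow_const (fun t => Or.inr hν.le)
  -- Lemma A: on intervals where V > 0, W := V^(-μ) decreases at rate ≥ c·(-μ)
  have lemA : ∀ a b : ℝ, 0 ≤ a → a ≤ b → (∀ u ∈ Icc a b, 0 < V u) →
      V b ^ (-μ) + c * -μ * b ≤ V a ^ (-μ) + c * -μ * a := by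
    intro a b ha hab hpos
    have key : ∀ x ∈ Ioo a b, HasDerivAt (fun t => V t ^ (-μ) + c * -μ * t)
        (deriv V x * -μ * V x ^ (-μ - 1) + c * -μ) x := by
      intro x hx
      have hx0 : 0 ≤ x := le_trans ha hx.1.le
      have hVx : 0 < V x := hpos x ⟨hx.1.le, hx.2.le⟩
      obtain ⟨hd, _⟩ := hdiff x hx0 hVx
      have h1 : HasDerivAt (fun t => V t ^ (-μ)) (deriv V x * -μ * V x ^ (-μ - 1)) x :=
        (hd.hasDerivAt).rpow_const (Or.inl hVx.ne')
      have h2 : HasDerivAt (fun t => c * -μ * t) (c * -μ) x := by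
        simpa using (hasDerivAt_id x).const_mul (c * -μ)
      exact h1.add h2
    have hanti : AntitoneOn (fun t => V t ^ (-μ) + c * -μ * t) (Icc a b) := by
      apply antitoneOn_of_deriv_nonpos (convex_Icc a b)
      · exact (hWcont.add (continuous_const.mul continuous_id)).continuousOn
      · rw [interior_Icc]
        intro x hx
        exact (key x hx).differentiableAt.differentiableWithinAt
      · rw [interior_Icc]
        intro x hx
        rw [(key x hx).deriv]
        have hx0 : 0 ≤ x := le_trans ha hx.1.le
        have hVx : 0 < V x := hpos x ⟨hx.1.le, hx.2.le⟩
        obtain ⟨_, hle⟩ := hdiff x hx0 hVx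
        have hmulnn : 0 ≤ -μ * V x ^ (-μ - 1) :=
          mul_nonneg hν.le (Real.rpow_nonneg hVx.le _)
        have hmul : deriv V x * (-μ * V x ^ (-μ - 1)) ≤
            (-c * V x ^ (1 + μ)) * (-μ * V x ^ (-μ - 1)) :=
          mul_le_mul_of_nonneg_right hle hmulnn
        have hAB : V x ^ (1 + μ) * V x ^ (-μ - 1) = 1 := by
          rw [← Real.rpow_add hVx, show (1 + μ) + (-μ - 1) = 0 by ring, Real.rpow_zero]
        have heq : (-c * V x ^ (1 + μ)) * (-μ * V x ^ (-μ - 1)) = -(c * -μ) := by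
          calc (-c * V x ^ (1 + μ)) * (-μ * V x ^ (-μ - 1))
              = c * μ * (V x ^ (1 + μ) * V x ^ (-μ - 1)) := by ring
            _ = -(c * -μ) := by rw [hAB]; ring
        have : deriv V x * -μ * V x ^ (-μ - 1) ≤ -(c * -μ) := by
          calc deriv V x * -μ * V x ^ (-μ - 1)
              = deriv V x * (-μ * V x ^ (-μ - 1)) := by ring
            _ ≤ (-c * V x ^ (1 + μ)) * (-μ * V x ^ (-μ - 1)) := hmul
            _ = -(c * -μ) := heq
        linarith
    exact hanti (left_mem_Icc.2 hab) (right_mem_Icc.2 hab) hab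
  -- Lemma B: once V hits zero it stays zero
  have lemB : ∀ a b : ℝ, 0 ≤ a → a ≤ b → V a = 0 → V b = 0 := by
    intro a b ha hab hVa
    by_contra hVb
    have hVb' : 0 < V b := lt_of_le_of_ne (hnn b) (Ne.symm hVb)
    set S := {u : ℝ | u ∈ Icc a b ∧ V u = 0} with hSdef
    have hSne : S.Nonempty := ⟨a, ⟨le_refl a, hab⟩, hVa⟩
    have hSbdd : BddAbove S := ⟨b, fun u hu => hu.1.2⟩
    have hSclosed : IsClosed S := by
      have : S = Icc a b ∩ V ⁻¹' {0} := by
        ext u; simp [hSdef]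
      rw [this]
      exact isClosed_Icc.inter (isClosed_singleton.preimage hcont)
    set s := sSup S with hsdef
    have hsS : s ∈ S := hSclosed.csSup_mem hSne hSbdd
    have hVs : V s = 0 := hsS.2
    have hsb : s < b := lt_of_le_of_ne hsS.1.2 (fun h => hVb (h ▸ hVs))
    have hpos : ∀ u, s < u → u ≤ b → 0 < V u := by
      intro u hu1 hu2
      rcases lt_or_eq_of_le (hnn u) with h | h
      · exact h
      · exfalso
        have huS : u ∈ S := ⟨⟨le_trans hsS.1.1 hu1.le, hu2⟩, h.symm⟩
        exact absurd (le_csSup hSbdd huS) (not_le.2 hu1)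
    have hkey : ∀ s' ∈ Ioc s b, V b ^ (-μ) ≤ V s' ^ (-μ) := by
      intro s' hs'
      have h0s' : 0 ≤ s' := le_trans ha (le_trans hsS.1.1 hs'.1.le)
      have hA := lemA s' b h0s' hs'.2
        (fun u hu => hpos u (lt_of_lt_of_le hs'.1 hu.1) hu.2)
      have hmono : c * -μ * s' ≤ c * -μ * b := by
        exact mul_le_mul_of_nonneg_left hs'.2 hcν.le
      linarith
    have htend : Tendsto (fun t => V t ^ (-μ)) (𝓝[>] s) (𝓝 0) := by
      have h1 : Tendsto (fun t => V t ^ (-μ)) (𝓝 s) (𝓝 (V s ^ (-μ))) :=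
        hWcont.tendsto s
      rw [hVs, Real.zero_rpow hν.ne'] at h1
      exact h1.mono_left nhdsWithin_le_nhds
    have hWb0 : V b ^ (-μ) ≤ 0 :=
      ge_of_tendsto htend
        (Filter.eventually_of_mem (Ioc_mem_nhdsGT_of_mem ⟨le_refl s, hsb⟩) hkey)
    exact absurd hWb0 (not_le.2 (Real.rpow_pos_of_pos hVb' _))
  -- main argument
  intro t ht
  have hT0 : 0 ≤ V 0 ^ (-μ) / (c * -μ) :=
    div_nonneg (Real.rpow_nonneg (hnn 0) _) hcν.le
  have ht0 : 0 ≤ t := le_trans hT0 ht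
  rcases eq_or_lt_of_le (hnn 0) with h0 | h0
  · exact lemB 0 t le_rfl ht0 h0.symm
  · have hT : c * -μ * (V 0 ^ (-μ) / (c * -μ)) = V 0 ^ (-μ) := by
      rw [mul_comm, div_mul_cancel₀ _ hcν.ne']
    have hex : ∃ s ∈ Icc (0:ℝ) (V 0 ^ (-μ) / (c * -μ)), V s = 0 := by
      by_contra hno
      push_neg at hno
      have hpos : ∀ u ∈ Icc (0:ℝ) (V 0 ^ (-μ) / (c * -μ)), 0 < V u := fun u hu =>
        lt_of_le_of_ne (hnn u) (Ne.symm (hno u hu))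
      have hA := lemA 0 (V 0 ^ (-μ) / (c * -μ)) le_rfl hT0 hpos
      have hWT : 0 < V (V 0 ^ (-μ) / (c * -μ)) ^ (-μ) :=
        Real.rpow_pos_of_pos (hpos _ ⟨hT0, le_rfl⟩) _
      rw [hT] at hA
      linarith
    obtain ⟨s, hs, hVs⟩ := hex
    exact lemB s t hs.1 (le_trans hs.2 ht) hVs
end
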